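/- Let e ≥ 1 be an integer and let k and l be positive integers with k ≡ l (mod 3·2^{e−1}). Then D_k(u, 1) = D_l(u, 1) in ℤ/2^eℤ for every u ∈ ℤ/2^eℤ, where D_k denotes the Dickson polynomial of the first kind evaluated over ℤ/2^eℤ. -/

import Mathlib

open Polynomial

/-- The integer Dickson sequence `D_n(u, 1)`. -/
private def dseq (u : ℤ) : ℕ → ℤ
  | 0 => 2
  | 1 => u
  | (n + 2) => u * dseq u (n + 1) - dseq u n

private lemma dseq_zero (u : ℤ) : dseq u 0 = 2 := rfl
private lemma dseq_one (u : ℤ) : dseq u 1 = u := rfl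
private lemma dseq_add_two (u : ℤ) (n : ℕ) :
    dseq u (n + 2) = u * dseq u (n + 1) - dseq u n := rfl

private lemma dseq_eval (u : ℤ) (n : ℕ) :
    (Polynomial.dickson 1 1 n).eval u = dseq u n := by
  induction n using Nat.strong_induction_on with
  | _ n ih =>
    match n with
    | 0 => simp [dseq_zero, Polynomial.dickson_zero]
    | 1 => simp [dseq_one, Polynomial.dickson_one]
    | (m + 2) =>
      rw [Polynomial.dickson_add_two, dseq_add_two]
      simp [ih m (by omega), ih (m + 1) (by omega)]

/-- The invariant of the recurrence. -/
private lemma dseq_inv (u : ℤ) (n : ℕ) :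
    dseq u (n + 1) ^ 2 + dseq u n ^ 2 - u * dseq u n * dseq u (n + 1) = 4 - u ^ 2 := by
  induction n with
  | zero => simp [dseq_zero, dseq_one]; ring
  | succ m ih =>
    rw [dseq_add_two]
    linear_combination ih

/-- Doubling formulas. -/
private lemma dseq_double (u : ℤ) (m : ℕ) :
    dseq u (2 * m) = dseq u m ^ 2 - 2 ∧
    dseq u (2 * m + 1) = dseq u m * dseq u (m + 1) - u := by
  induction m with
  | zero => simp [dseq_zero, dseq_one]; ring
  | succ m ih =>
    obtain ⟨h1, h2⟩ := ih
    have hA : dseq u (2 * (m + 1)) = dseq u (m + 1) ^ 2 - 2 := by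
      rw [show 2 * (m + 1) = (2 * m) + 2 by ring, dseq_add_two, h1, h2]
      linear_combination -dseq_inv u m
    refine ⟨hA, ?_⟩
    rw [show 2 * (m + 1) + 1 = (2 * m + 1) + 2 by ring, dseq_add_two,
      show 2 * m + 1 + 1 = 2 * (m + 1) by ring, hA, h2,
      show m + 1 + 1 = m + 2 from rfl, dseq_add_two]
    ring

/-- Key divisibility, by induction on the exponent. -/
private lemma dseq_key (d : ℕ) (u : ℤ) :
    (2 ^ (d + 1) : ℤ) ∣ dseq u (3 * 2 ^ d) - 2 ∧
    (2 ^ (d + 1) : ℤ) ∣ dseq u (3 * 2 ^ d + 1) - u ∧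
    (Odd u → (2 ^ (d + 2) : ℤ) ∣ dseq u (3 * 2 ^ d) - 2) := by
  induction d with
  | zero =>
    simp only [pow_zero, mul_one, zero_add, pow_one]
    have h3 : dseq u 3 = u ^ 3 - 3 * u := by
      show u * (u * u - 2) - u = _; ring
    have h4 : dseq u 4 = u ^ 4 - 4 * u ^ 2 + 2 := by
      show u * (u * (u * u - 2) - u) - (u * u - 2) = _; ring
    have hodd : Odd u → (4 : ℤ) ∣ dseq u 3 - 2 := by
      rintro ⟨v, rfl⟩
      rw [h3]
      exact ⟨2 * v ^ 3 + 3 * v ^ 2 - 1, by ring⟩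
    refine ⟨?_, ?_, by simpa using hodd⟩
    · rcases Int.even_or_odd u with ⟨v, rfl⟩ | ho
      · rw [show dseq (v + v) 3 - 2 = 2 * (4 * v ^ 3 - 3 * v - 1) by rw [h3]; ring]
        exact Dvd.intro _ rfl
      · exact dvd_trans (by norm_num) (hodd ho)
    · rcases Int.even_or_odd u with ⟨v, rfl⟩ | ⟨v, rfl⟩
      · rw [show 3 + 1 = 4 from rfl,
          show dseq (v + v) 4 - (v + v) = 2 * (8 * v ^ 4 - 8 * v ^ 2 + 1 - v) by rw [h4]; ring]
        exact Dvd.intro _ rfl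
      · rw [show 3 + 1 = 4 from rfl, show dseq (2 * v + 1) 4 - (2 * v + 1) =
            2 * (8 * v ^ 4 + 16 * v ^ 3 + 4 * v ^ 2 - 5 * v - 1) by rw [h4]; ring]
        exact Dvd.intro _ rfl
  | succ d ih =>
    obtain ⟨h2, h1, hodd⟩ := ih
    set N : ℕ := 3 * 2 ^ d with hN
    have hNN : 3 * 2 ^ (d + 1) = 2 * N := by rw [hN]; ring
    have hd2 : dseq u (2 * N) = dseq u N ^ 2 - 2 := (dseq_double u N).1
    have hd1 : dseq u (2 * N + 1) = dseq u N * dseq u (N + 1) - u := (dseq_double u N).2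
    have heven : (2 : ℤ) ∣ dseq u N := by
      have h := dvd_trans (dvd_pow_self (2:ℤ) (Nat.succ_ne_zero d)) h2
      omega
    have hmain : ((2 : ℤ) ^ (d + 2)) ∣ dseq u (2 * N) - 2 := by
      rw [hd2, show dseq u N ^ 2 - 2 - 2 = (dseq u N - 2) * (dseq u N + 2) by ring,
        show (2 : ℤ) ^ (d + 2) = 2 ^ (d + 1) * 2 by ring]
      exact mul_dvd_mul h2 (by omega)
    refine ⟨?_, ?_, ?_⟩
    · rw [hNN, show d + 1 + 1 = d + 2 from rfl]
      exact hmain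
    · rw [hNN, hd1, show dseq u N * dseq u (N + 1) - u - u =
          (dseq u N - 2) * dseq u (N + 1) + 2 * (dseq u (N + 1) - u) by ring,
        show d + 1 + 1 = d + 2 from rfl]
      have hsecond : ((2 : ℤ) ^ (d + 2)) ∣ 2 * (dseq u (N + 1) - u) := by
        rw [show (2 : ℤ) ^ (d + 2) = 2 * 2 ^ (d + 1) by ring]
        exact mul_dvd_mul_left 2 h1
      refine dvd_add ?_ hsecond
      rcases Int.even_or_odd u with he | ho
      · have hev : (2 : ℤ) ∣ dseq u (N + 1) := by
          have h2' := dvd_trans (dvd_pow_self (2:ℤ) (Nat.succ_ne_zero d)) h1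
          obtain ⟨v, hv⟩ := he
          omega
        rw [show (2 : ℤ) ^ (d + 2) = 2 ^ (d + 1) * 2 by ring]
        exact mul_dvd_mul h2 hev
      · exact dvd_mul_of_dvd_left (hodd ho) _
    · intro ho
      rw [hNN, hd2, show dseq u N ^ 2 - 2 - 2 = (dseq u N - 2) * (dseq u N + 2) by ring,
        show (2 : ℤ) ^ (d + 1 + 2) = 2 ^ (d + 2) * 2 by ring]
      exact mul_dvd_mul (hodd ho) (by omega)

/-- One-step periodicity. -/
private lemma dseq_period (d : ℕ) (u : ℤ) (k : ℕ) :
    (2 ^ (d + 1) : ℤ) ∣ dseq u (k + 3 * 2 ^ d) - dseq u k := by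
  obtain ⟨h2, h1, -⟩ := dseq_key d u
  set N : ℕ := 3 * 2 ^ d with hN
  suffices h : ∀ k, ((2 ^ (d + 1) : ℤ) ∣ dseq u (k + N) - dseq u k) ∧
      ((2 ^ (d + 1) : ℤ) ∣ dseq u (k + 1 + N) - dseq u (k + 1)) from (h k).1
  intro k
  induction k with
  | zero => exact ⟨by simpa [dseq_zero] using h2, by simpa [dseq_one, Nat.add_comm] using h1⟩
  | succ m ih =>
    obtain ⟨ha, hb⟩ := ih
    refine ⟨hb, ?_⟩
    rw [show m + 1 + 1 + N = (m + N) + 2 by ring, dseq_add_two,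
      show m + 1 + 1 = m + 2 from rfl, dseq_add_two,
      show m + N + 1 = m + 1 + N by ring]
    have h := dvd_sub (Dvd.dvd.mul_left hb u) ha
    convert h using 1
    case e'_2 => rfl
    ring

private lemma dseq_period_mul (d : ℕ) (u : ℤ) (k c : ℕ) :
    (2 ^ (d + 1) : ℤ) ∣ dseq u (k + 3 * 2 ^ d * c) - dseq u k := by
  induction c with
  | zero => simp
  | succ c ih =>
    rw [show k + 3 * 2 ^ d * (c + 1) = (k + 3 * 2 ^ d * c) + 3 * 2 ^ d by ring]
    have h := dvd_add (dseq_period d u (k + 3 * 2 ^ d * c)) ih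
    convert h using 1
    case e'_2 => rfl
    ring

theorem dickson_eval_congr_two_pow (e : ℕ) (he : 1 ≤ e) (k l : ℕ) (hk : 0 < k) (hl : 0 < l)
    (hkl : k ≡ l [MOD 3 * 2 ^ (e - 1)]) (u : ZMod (2 ^ e)) :
    Polynomial.eval u (Polynomial.dickson 1 1 k) = Polynomial.eval u (Polynomial.dickson 1 1 l) := by
  obtain ⟨d, rfl⟩ : ∃ d, e = d + 1 := ⟨e - 1, by omega⟩
  have hd : d + 1 - 1 = d := rfl
  rw [hd] at hkl
  obtain ⟨x, rfl⟩ := ZMod.intCast_surjective (n := 2 ^ (d + 1)) u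
  have key : ∀ n : ℕ, Polynomial.eval ((x : ℤ) : ZMod (2 ^ (d + 1)))
      (Polynomial.dickson 1 1 n) = ((dseq x n : ℤ) : ZMod (2 ^ (d + 1))) := by
    intro n
    have hmap : (Polynomial.dickson 1 1 n : (ZMod (2 ^ (d + 1)))[X]) =
        (Polynomial.dickson 1 1 n : ℤ[X]).map (Int.castRingHom (ZMod (2 ^ (d + 1)))) := by
      rw [Polynomial.map_dickson]; norm_num
    rw [hmap, Polynomial.eval_map]
    rw [show ((x : ℤ) : ZMod (2 ^ (d + 1))) = (Int.castRingHom (ZMod (2 ^ (d + 1)))) x from rfl,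
      Polynomial.eval₂_hom, dseq_eval]
    rfl
  rw [key k, key l]
  rw [ZMod.intCast_eq_intCast_iff, Int.modEq_iff_dvd]
  push_cast
  rcases le_total k l with h | h
  · obtain ⟨c, hc⟩ := (Nat.modEq_iff_dvd' h).mp hkl
    have hl' : l = k + 3 * 2 ^ d * c := by omega
    rw [hl']
    exact dseq_period_mul d x k c
  · obtain ⟨c, hc⟩ := (Nat.modEq_iff_dvd' h).mp hkl.symm
    have hk' : k = l + 3 * 2 ^ d * c := by omega
    rw [hk']
    exact dvd_sub_comm.mp (dseq_period_mul d x l c)
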